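/- Let σ be a permutation of size n and (D,w) = ψ_FV(σ) its image under the Françon–Viennot map. Then tw(D,w) = tot(σ), GC(D,w) = GC(σ), and DC(D,w) = Rec(σ). -/

import Mathlib

open scoped Classical
noncomputable section

/-- Value of `σ` at the 1-indexed position `j`, with the convention that positions
outside `[1,n]` (in particular positions `0` and `n+1`) carry the value `0`. -/
def pval (n : ℕ) (σ : Equiv.Perm (Fin n)) (j : ℕ) : ℕ :=
  if h : 1 ≤ j ∧ j ≤ n then ((σ ⟨j - 1, by omega⟩ : Fin n) : ℕ) + 1 else 0
/-- Value of `σ` at the 1-indexed position `j`, with the conventions `σ_0 = 0` and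
`σ_{n+1} = n+1`. -/
def pval1 (n : ℕ) (σ : Equiv.Perm (Fin n)) (j : ℕ) : ℕ :=
  if j = 0 then 0 else if j ≤ n then pval n σ j else n + 1
/-- The (1-indexed) position of a value `v ∈ [1,n]` in `σ`. -/
def ppos (n : ℕ) (σ : Equiv.Perm (Fin n)) (v : ℕ) : ℕ :=
  if h : 1 ≤ v ∧ v ≤ n then ((σ.symm ⟨v - 1, by omega⟩ : Fin n) : ℕ) + 1 else 0
/-- Number of 31-2 patterns of `σ`. -/
def tot (n : ℕ) (σ : Equiv.Perm (Fin n)) : ℕ :=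
  ((Finset.Icc 1 n ×ˢ Finset.Icc 1 n).filter (fun p =>
    p.1 + 1 < p.2 ∧ pval n σ (p.1 + 1) < pval n σ p.2 ∧ pval n σ p.2 < pval n σ p.1)).card
/-- Number of 31-2 patterns of `σ` in which the value `k` plays the role of the `2`. -/
def totk (n : ℕ) (σ : Equiv.Perm (Fin n)) (k : ℕ) : ℕ :=
  ((Finset.Icc 1 n ×ˢ Finset.Icc 1 n).filter (fun p =>
    p.1 + 1 < p.2 ∧ pval n σ (p.1 + 1) < pval n σ p.2 ∧ pval n σ p.2 < pval n σ p.1 ∧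
      pval n σ p.2 = k)).card
/-- The set of recoils of `σ`: values `i` such that `i+1` is to the left of `i`. -/
def recSet (n : ℕ) (σ : Equiv.Perm (Fin n)) : Finset ℕ :=
  (Finset.Ico 1 n).filter (fun i => ppos n σ (i + 1) < ppos n σ i)
/-- The Genocchi descent set of `σ`: values immediately followed by a smaller value. -/
def gdesSet (n : ℕ) (σ : Equiv.Perm (Fin n)) : Finset ℕ :=
  (Finset.Icc 1 n).filter (fun v => pval1 n σ (ppos n σ v + 1) < v)
/-- Descent set of the Genocchi composition of descents `GC(σ)`. -/
def gcSet (n : ℕ) (σ : Equiv.Perm (Fin n)) : Finset ℕ :=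
  (gdesSet n σ).image (· - 1)
/-- Height of the path `D` (steps indexed by `[1, …]`, `true` = up-step) after `j` steps. -/
def hgt (D : ℕ → Bool) (j : ℕ) : ℤ :=
  ∑ t ∈ Finset.Icc 1 j, (if D t then (1 : ℤ) else -1)
/-- `D` is a Dyck path of size `n`: `2n` relevant steps (positions `1,…,2n`), never going
below the horizontal axis and ending on it; steps outside `[1,2n]` are normalized to `false`. -/
def IsDyckPath (n : ℕ) (D : ℕ → Bool) : Prop :=
  (∀ j, j ≤ 2 * n → 0 ≤ hgt D j) ∧ hgt D (2 * n) = 0 ∧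
    ∀ j, j = 0 ∨ 2 * n < j → D j = false
/-- `(D, w)` is a weighted Dyck path of size `n`: `w i ≤ (h_i - 1)/2` where `h_i` is the
height of the meeting point of steps `2i-1` and `2i`; `w` is normalized outside `[1,n]`. -/
def IsWDP (n : ℕ) (D : ℕ → Bool) (w : ℕ → ℕ) : Prop :=
  IsDyckPath n D ∧ (∀ i, 1 ≤ i → i ≤ n → 2 * (w i : ℤ) + 1 ≤ hgt D (2 * i - 1)) ∧
    ∀ i, i = 0 ∨ n < i → w i = 0
/-- Total weight of a weighted Dyck path. -/
def twW (n : ℕ) (w : ℕ → ℕ) : ℕ := ∑ i ∈ Finset.Icc 1 n, w i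
/-- Descent set of a weighted Dyck path. -/
def dcSetW (n : ℕ) (D : ℕ → Bool) (w : ℕ → ℕ) : Finset ℕ :=
  (Finset.Ico 1 n).filter (fun i => w (i + 1) < w i ∨ (w i = w (i + 1) ∧ D (2 * i) = true))
/-- Genocchi descent set of a weighted Dyck path. -/
def gdesSetW (n : ℕ) (D : ℕ → Bool) : Finset ℕ :=
  (Finset.Icc 2 n).filter (fun i => D (2 * i - 1) = false)
/-- Descent set of the Genocchi composition of descents of a weighted Dyck path. -/
def gcSetW (n : ℕ) (D : ℕ → Bool) : Finset ℕ :=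
  (gdesSetW n D).image (· - 1)
/-- Genocchi descent set of type 0 of a weighted Dyck path. -/
def gdes0SetW (n : ℕ) (D : ℕ → Bool) : Finset ℕ :=
  (Finset.Ico 1 n).filter (fun i => D (2 * i) = false)
/-- Descent set of type 0 of a weighted Dyck path. -/
def dc0SetW (n : ℕ) (D : ℕ → Bool) (w : ℕ → ℕ) : Finset ℕ :=
  (Finset.Ico 1 n).filter (fun i =>
    w (i + 1) < w i ∨ (w i = w (i + 1) ∧ D (2 * i + 1) = true))

/-! ### The Françon–Viennot bijection -/
/-- The Dyck path of the Françon–Viennot map (conventions `σ_0 = 0`, `σ_{n+1} = n+1`):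
for `k = σ_j`, step `2k-1` is up iff `σ_j < σ_{j+1}` and step `2k` is up iff
`¬ (σ_{j-1} < σ_j)`. -/
def fvPath (n : ℕ) (σ : Equiv.Perm (Fin n)) : ℕ → Bool := fun m =>
  if 1 ≤ m ∧ m ≤ 2 * n then
    if m % 2 = 1 then
      if pval1 n σ (ppos n σ ((m + 1) / 2)) < pval1 n σ (ppos n σ ((m + 1) / 2) + 1)
        then true else false
    else
      if pval1 n σ (ppos n σ (m / 2) - 1) < pval1 n σ (ppos n σ (m / 2))
        then false else true
  else false
/-- The weight of the Françon–Viennot map: `w k = tot_k σ`. -/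
def fvWeight (n : ℕ) (σ : Equiv.Perm (Fin n)) : ℕ → ℕ := fun k =>
  if 1 ≤ k ∧ k ≤ n then totk n σ k else 0

section Helpers
variable (n : ℕ) (σ : Equiv.Perm (Fin n))

lemma pval_le (j : ℕ) : pval n σ j ≤ n := by
  unfold pval
  split
  · next h => have := (σ ⟨j - 1, by omega⟩).isLt; omega
  · omega

lemma pval_pos {j : ℕ} (h1 : 1 ≤ j) (h2 : j ≤ n) : 1 ≤ pval n σ j := by
  unfold pval; rw [dif_pos ⟨h1, h2⟩]; omega

lemma ppos_pos {k : ℕ} (h1 : 1 ≤ k) (h2 : k ≤ n) : 1 ≤ ppos n σ k := by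
  unfold ppos; rw [dif_pos ⟨h1, h2⟩]; omega

lemma ppos_le {k : ℕ} (h1 : 1 ≤ k) (h2 : k ≤ n) : ppos n σ k ≤ n := by
  unfold ppos; rw [dif_pos ⟨h1, h2⟩]
  have := (σ.symm ⟨k - 1, by omega⟩).isLt; omega

lemma pval_eq_iff {j k : ℕ} (hj1 : 1 ≤ j) (hj2 : j ≤ n) (hk1 : 1 ≤ k) (hk2 : k ≤ n) :
    pval n σ j = k ↔ ppos n σ k = j := by
  unfold pval ppos
  rw [dif_pos ⟨hj1, hj2⟩, dif_pos ⟨hk1, hk2⟩]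
  constructor
  · intro h
    have h' : (⟨k - 1, by omega⟩ : Fin n) = σ ⟨j - 1, by omega⟩ :=
      Fin.ext (show k - 1 = _ by omega)
    rw [h', Equiv.symm_apply_apply]
    show j - 1 + 1 = j
    omega
  · intro h
    have h' : (⟨j - 1, by omega⟩ : Fin n) = σ.symm ⟨k - 1, by omega⟩ :=
      Fin.ext (show j - 1 = _ by omega)
    rw [h', Equiv.apply_symm_apply]
    show k - 1 + 1 = k
    omega

lemma pval_ppos {k : ℕ} (hk1 : 1 ≤ k) (hk2 : k ≤ n) : pval n σ (ppos n σ k) = k :=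
  (pval_eq_iff n σ (ppos_pos n σ hk1 hk2) (ppos_le n σ hk1 hk2) hk1 hk2).2 rfl

lemma pval1_eq_pval {j : ℕ} (h1 : 1 ≤ j) (h2 : j ≤ n) : pval1 n σ j = pval n σ j := by
  unfold pval1; rw [if_neg (by omega), if_pos h2]

lemma pval1_ppos {k : ℕ} (hk1 : 1 ≤ k) (hk2 : k ≤ n) : pval1 n σ (ppos n σ k) = k := by
  rw [pval1_eq_pval n σ (ppos_pos n σ hk1 hk2) (ppos_le n σ hk1 hk2)]
  exact pval_ppos n σ hk1 hk2

lemma pval1_pos {j : ℕ} (h1 : 1 ≤ j) : 1 ≤ pval1 n σ j := by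
  unfold pval1
  rw [if_neg (by omega)]
  split
  · next h => exact pval_pos n σ h1 h
  · omega

lemma pval1_ne {k j : ℕ} (hk1 : 1 ≤ k) (hk2 : k ≤ n) (hj : j ≠ ppos n σ k) :
    pval1 n σ j ≠ k := by
  unfold pval1
  split
  · omega
  · split
    · next h h' =>
      intro hc
      exact hj ((pval_eq_iff n σ (by omega) h' hk1 hk2).1 hc).symm
    · omega

lemma fvPath_odd {k : ℕ} (hk1 : 1 ≤ k) (hk2 : k ≤ n) :
    fvPath n σ (2 * k - 1) = false ↔ ¬ (k < pval1 n σ (ppos n σ k + 1)) := by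
  unfold fvPath
  rw [if_pos (by omega : 1 ≤ 2 * k - 1 ∧ 2 * k - 1 ≤ 2 * n), if_pos (by omega : (2 * k - 1) % 2 = 1)]
  have h2 : (2 * k - 1 + 1) / 2 = k := by omega
  rw [h2, pval1_ppos n σ hk1 hk2]
  split <;> simp_all

lemma fvPath_even {k : ℕ} (hk1 : 1 ≤ k) (hk2 : k ≤ n) :
    fvPath n σ (2 * k) = true ↔ ¬ (pval1 n σ (ppos n σ k - 1) < k) := by
  unfold fvPath
  rw [if_pos (by omega : 1 ≤ 2 * k ∧ 2 * k ≤ 2 * n), if_neg (by omega : ¬ (2 * k) % 2 = 1)]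
  have h2 : 2 * k / 2 = k := by omega
  rw [h2, pval1_ppos n σ hk1 hk2]
  split <;> simp_all

end Helpers
section Parts
variable (n : ℕ) (σ : Equiv.Perm (Fin n))

lemma fv_part1 : twW n (fvWeight n σ) = tot n σ := by
  unfold twW tot
  rw [Finset.card_eq_sum_card_fiberwise
    (f := fun p => pval n σ p.2) (t := Finset.Icc 1 n) ?_]
  · apply Finset.sum_congr rfl
    intro k hk
    rw [Finset.mem_Icc] at hk
    unfold fvWeight
    rw [if_pos hk]
    unfold totk
    congr 1
    rw [Finset.filter_filter]
    apply Finset.filter_congr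
    intro p _
    constructor
    · rintro ⟨a, b, c, d⟩; exact ⟨⟨a, b, c⟩, d⟩
    · rintro ⟨⟨a, b, c⟩, d⟩; exact ⟨a, b, c, d⟩
  · intro p hp
    rw [Finset.mem_coe, Finset.mem_filter] at hp
    obtain ⟨hmem, h1, h2, h3⟩ := hp
    rw [Finset.mem_product, Finset.mem_Icc, Finset.mem_Icc] at hmem
    rw [Finset.mem_coe, Finset.mem_Icc]
    show 1 ≤ pval n σ p.2 ∧ pval n σ p.2 ≤ n
    have := pval_le n σ p.1
    omega

lemma fv_gdes : gdesSetW n (fvPath n σ) = gdesSet n σ := by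
  ext i
  simp only [gdesSetW, gdesSet, Finset.mem_filter, Finset.mem_Icc]
  constructor
  · rintro ⟨⟨h2, hn⟩, hD⟩
    have hi1 : 1 ≤ i := by omega
    have hne := pval1_ne n σ hi1 hn (j := ppos n σ i + 1) (by omega)
    have := (fvPath_odd n σ hi1 hn).1 hD
    exact ⟨⟨hi1, hn⟩, by omega⟩
  · rintro ⟨⟨h1, hn⟩, hlt⟩
    have hi2 : 2 ≤ i := by
      rcases Nat.lt_or_ge i 2 with h | h
      · exfalso
        have : i = 1 := by omega
        subst this
        have := pval1_pos n σ (j := ppos n σ 1 + 1) (by omega)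
        omega
      · exact h
    exact ⟨⟨hi2, hn⟩, (fvPath_odd n σ h1 hn).2 (by omega)⟩

lemma fv_part2 : gcSetW n (fvPath n σ) = gcSet n σ := by
  unfold gcSetW gcSet
  rw [fv_gdes]

end Parts
section Part3
variable (n : ℕ) (σ : Equiv.Perm (Fin n))

/-- The set of left endpoints of 31-2 patterns with `2`-value `k`. -/
def fvS (k : ℕ) : Finset ℕ :=
  (Finset.Icc 1 n).filter (fun m =>
    m + 1 < ppos n σ k ∧ pval n σ (m + 1) < k ∧ k < pval n σ m)

lemma totk_eq_card {k : ℕ} (hk1 : 1 ≤ k) (hk2 : k ≤ n) :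
    totk n σ k = (fvS n σ k).card := by
  unfold totk fvS
  apply Finset.card_bij (fun p _ => p.1)
  · rintro ⟨a, b⟩ hp
    simp only [Finset.mem_filter, Finset.mem_product, Finset.mem_Icc] at hp ⊢
    obtain ⟨⟨ha, hb⟩, h1, h2, h3, h4⟩ := hp
    have hb' : ppos n σ k = b := (pval_eq_iff n σ hb.1 hb.2 hk1 hk2).1 h4
    rw [h4] at h2 h3
    exact ⟨ha, by omega, h2, h3⟩
  · rintro ⟨a, b⟩ hp ⟨a', b'⟩ hp' h
    simp only [Finset.mem_filter, Finset.mem_product, Finset.mem_Icc] at hp hp'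
    obtain ⟨⟨ha, hb⟩, h1, h2, h3, h4⟩ := hp
    obtain ⟨⟨ha', hb'⟩, h1', h2', h3', h4'⟩ := hp'
    have e1 : ppos n σ k = b := (pval_eq_iff n σ hb.1 hb.2 hk1 hk2).1 h4
    have e2 : ppos n σ k = b' := (pval_eq_iff n σ hb'.1 hb'.2 hk1 hk2).1 h4'
    simp only at h
    simp [h, ← e1, ← e2]
  · intro m hm
    simp only [Finset.mem_filter, Finset.mem_Icc] at hm
    obtain ⟨⟨hm1, hm2⟩, hw, h1, h2⟩ := hm
    refine ⟨(m, ppos n σ k), ?_, rfl⟩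
    simp only [Finset.mem_filter, Finset.mem_product, Finset.mem_Icc]
    have hp1 := ppos_pos n σ hk1 hk2
    have hp2 := ppos_le n σ hk1 hk2
    have hpv := pval_ppos n σ hk1 hk2
    rw [hpv]
    exact ⟨⟨⟨hm1, hm2⟩, hp1, hp2⟩, hw, h1, h2, rfl⟩

lemma fvS_subset_lt {k : ℕ} (hk1 : 1 ≤ k) (hk2 : k + 1 ≤ n)
    (h : ppos n σ (k + 1) < ppos n σ k) : fvS n σ (k + 1) ⊆ fvS n σ k := by
  intro m hm
  simp only [fvS, Finset.mem_filter, Finset.mem_Icc] at hm ⊢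
  obtain ⟨⟨hm1, hm2⟩, hw, h1, h2⟩ := hm
  have hqn := ppos_le n σ (show 1 ≤ k + 1 by omega) hk2
  have hne : pval n σ (m + 1) ≠ k := by
    intro hc
    have := (pval_eq_iff n σ (by omega) (by omega) hk1 (by omega)).1 hc
    omega
  exact ⟨⟨hm1, hm2⟩, by omega, by omega, by omega⟩

lemma fvS_subset_gt {k : ℕ} (hk1 : 1 ≤ k) (hk2 : k + 1 ≤ n)
    (h : ppos n σ k < ppos n σ (k + 1)) : fvS n σ k ⊆ fvS n σ (k + 1) := by
  intro m hm
  simp only [fvS, Finset.mem_filter, Finset.mem_Icc] at hm ⊢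
  obtain ⟨⟨hm1, hm2⟩, hw, h1, h2⟩ := hm
  have hne : pval n σ m ≠ k + 1 := by
    intro hc
    have := (pval_eq_iff n σ hm1 hm2 (by omega) hk2).1 hc
    omega
  exact ⟨⟨hm1, hm2⟩, by omega, by omega, by omega⟩

lemma exists_extra_lt {k : ℕ} (hk1 : 1 ≤ k) (hk2 : k + 1 ≤ n)
    (h : ppos n σ (k + 1) < ppos n σ k) (hE : pval n σ (ppos n σ k - 1) < k) :
    ∃ m, m ∈ fvS n σ k ∧ m ∉ fvS n σ (k + 1) := by
  set p := ppos n σ k with hp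
  set q := ppos n σ (k + 1) with hq
  have hp1 : 1 ≤ p := ppos_pos n σ hk1 (by omega)
  have hpn : p ≤ n := ppos_le n σ hk1 (by omega)
  have hq1 : 1 ≤ q := ppos_pos n σ (by omega) hk2
  have hpvq : pval n σ q = k + 1 := pval_ppos n σ (by omega) hk2
  have hqne : q ≠ p - 1 := by intro hc; rw [hc] at hpvq; omega
  have hqle : q ≤ p - 2 := by omega
  set M := (Finset.Icc q (p - 2)).filter (fun m => k < pval n σ m) with hM
  have hMne : M.Nonempty := ⟨q, by
    simp only [hM, Finset.mem_filter, Finset.mem_Icc]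
    exact ⟨⟨le_refl q, hqle⟩, by omega⟩⟩
  set m := M.max' hMne with hm
  have hmM : m ∈ M := M.max'_mem hMne
  simp only [hM, Finset.mem_filter, Finset.mem_Icc] at hmM
  obtain ⟨⟨hmq, hmp⟩, hmv⟩ := hmM
  have hnext : pval n σ (m + 1) < k := by
    by_cases hc : m + 1 = p - 1
    · rw [hc]; exact hE
    · by_contra hcon
      push_neg at hcon
      have hne : pval n σ (m + 1) ≠ k := by
        intro hc2
        have := (pval_eq_iff n σ (by omega) (by omega) hk1 (by omega)).1 hc2
        omega
      have hmem : m + 1 ∈ M := by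
        simp only [hM, Finset.mem_filter, Finset.mem_Icc]
        exact ⟨⟨by omega, by omega⟩, by omega⟩
      have := M.le_max' _ hmem
      omega
  refine ⟨m, ?_, ?_⟩
  · simp only [fvS, Finset.mem_filter, Finset.mem_Icc]
    exact ⟨⟨by omega, by omega⟩, by omega, hnext, hmv⟩
  · simp only [fvS, Finset.mem_filter, Finset.mem_Icc]
    intro hc
    omega

lemma extra_gt {k : ℕ} (hk1 : 1 ≤ k) (hk2 : k + 1 ≤ n)
    (h : ppos n σ k < ppos n σ (k + 1)) (hp2 : 2 ≤ ppos n σ k)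
    (hE : k < pval n σ (ppos n σ k - 1)) :
    (ppos n σ k - 1) ∈ fvS n σ (k + 1) ∧ (ppos n σ k - 1) ∉ fvS n σ k := by
  set p := ppos n σ k with hp
  have hpn : p ≤ n := ppos_le n σ hk1 (by omega)
  have hpv : pval n σ p = k := pval_ppos n σ hk1 (by omega)
  have hne : pval n σ (p - 1) ≠ k + 1 := by
    intro hc
    have := (pval_eq_iff n σ (by omega) (by omega) (by omega) hk2).1 hc
    omega
  have hstep : p - 1 + 1 = p := by omega
  constructor
  · simp only [fvS, Finset.mem_filter, Finset.mem_Icc, hstep]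
    exact ⟨⟨by omega, by omega⟩, by omega, by omega, by omega⟩
  · simp only [fvS, Finset.mem_filter, Finset.mem_Icc, hstep]
    intro hc
    omega

lemma ppos_ne {k : ℕ} (hk1 : 1 ≤ k) (hk2 : k + 1 ≤ n) :
    ppos n σ k ≠ ppos n σ (k + 1) := by
  intro hc
  have h1 := pval_ppos n σ hk1 (by omega)
  have h2 := pval_ppos n σ (show 1 ≤ k + 1 by omega) hk2
  rw [hc] at h1
  omega

lemma fv_part3 : dcSetW n (fvPath n σ) (fvWeight n σ) = recSet n σ := by
  ext i
  simp only [dcSetW, recSet, Finset.mem_filter]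
  apply and_congr_right
  intro hi
  rw [Finset.mem_Ico] at hi
  obtain ⟨hi1, hi2⟩ := hi
  have hwA : fvWeight n σ i = totk n σ i := if_pos ⟨hi1, by omega⟩
  have hwB : fvWeight n σ (i + 1) = totk n σ (i + 1) := if_pos ⟨by omega, by omega⟩
  rw [hwA, hwB, totk_eq_card n σ hi1 (by omega), totk_eq_card n σ (show 1 ≤ i + 1 by omega) hi2]
  have hp1 : 1 ≤ ppos n σ i := ppos_pos n σ hi1 (by omega)
  have hpn : ppos n σ i ≤ n := ppos_le n σ hi1 (by omega)
  have hq1 : 1 ≤ ppos n σ (i + 1) := ppos_pos n σ (by omega) hi2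
  have hpq : ppos n σ i ≠ ppos n σ (i + 1) := ppos_ne n σ hi1 hi2
  have hD := fvPath_even n σ hi1 (by omega : i ≤ n)
  have hDne : pval1 n σ (ppos n σ i - 1) ≠ i := pval1_ne n σ hi1 (by omega) (by omega)
  rcases lt_trichotomy (ppos n σ (i + 1)) (ppos n σ i) with hlt | heq | hgt
  · constructor
    · intro _; exact hlt
    · intro _
      have hsub := fvS_subset_lt n σ hi1 hi2 hlt
      have hle := Finset.card_le_card hsub
      by_cases hcard : (fvS n σ (i + 1)).card < (fvS n σ i).card
      · exact Or.inl hcard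
      · refine Or.inr ⟨by omega, ?_⟩
        rw [hD]
        intro hEE
        have hp2 : 2 ≤ ppos n σ i := by omega
        rw [pval1_eq_pval n σ (show 1 ≤ ppos n σ i - 1 by omega)
          (show ppos n σ i - 1 ≤ n by omega)] at hEE
        obtain ⟨m, hm1, hm2⟩ := exists_extra_lt n σ hi1 hi2 hlt hEE
        have hss : fvS n σ (i + 1) ⊂ fvS n σ i := ⟨hsub, fun hss => hm2 (hss hm1)⟩
        exact hcard (Finset.card_lt_card hss)
  · exact absurd heq.symm hpq
  · constructor
    · intro hLHS
      exfalso
      have hsub := fvS_subset_gt n σ hi1 hi2 hgt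
      have hle := Finset.card_le_card hsub
      rcases hLHS with hcard | ⟨hcardeq, hDtrue⟩
      · omega
      · have hnE := hD.1 hDtrue
        have hp2 : 2 ≤ ppos n σ i := by
          by_contra hc
          have hpe : ppos n σ i = 1 := by omega
          have hz : pval1 n σ (ppos n σ i - 1) = 0 := by rw [hpe]; rfl
          omega
        rw [pval1_eq_pval n σ (show 1 ≤ ppos n σ i - 1 by omega)
          (show ppos n σ i - 1 ≤ n by omega)] at hnE hDne
        have hEE : i < pval n σ (ppos n σ i - 1) := by omega
        obtain ⟨hm1, hm2⟩ := extra_gt n σ hi1 hi2 hgt hp2 hEE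
        have hss : fvS n σ i ⊂ fvS n σ (i + 1) := ⟨hsub, fun hss => hm2 (hss hm1)⟩
        have := Finset.card_lt_card hss
        omega
    · intro hc
      omega

end Part3
/-- Proposition: for `(D, w) = ψ_FV(σ)` one has `tw (D,w) = tot σ`,
`GC (D,w) = GC σ` and `DC (D,w) = Rec σ` (compositions identified with their
descent sets). -/
theorem stats_through_FV (n : ℕ) (σ : Equiv.Perm (Fin n)) :
    twW n (fvWeight n σ) = tot n σ ∧
    gcSetW n (fvPath n σ) = gcSet n σ ∧
    dcSetW n (fvPath n σ) (fvWeight n σ) = recSet n σ := by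
  exact ⟨fv_part1 n σ, fv_part2 n σ, fv_part3 n σ⟩
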